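/- Let (X, d, μ) be a separable metric probability space. A point u ∈ X is a weak mode (for every null sequence (r_n) and every v ≠ u, liminf_{n→∞} μ(B(u,r_n))/μ(B(v,r_n)) ≥ 1) if and only if for every v ≠ u there exist sequences u_n → u and v_n → v such that for every null sequence (r_n), liminf_{n→∞} μ(B(u_n,r_n))/μ(B(v_n,r_n)) ≥ 1. -/

import Mathlib

open MeasureTheory Metric Filter Topology

/-- Ball-mass ratio with the conventions `c/0 = ∞` for `c > 0` and `0/0 = 1`. -/
noncomputable def mRatio (a b : ENNReal) : ENNReal :=
  if b = 0 then (if a = 0 then 1 else ⊤) else a / b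

private lemma ball_sup_aux {X : Type*} [MetricSpace X] [MeasurableSpace X] [BorelSpace X]
    (μ : MeasureTheory.Measure X) (v : X) (r : ℝ) (hr : 0 < r) (θ : ENNReal)
    (h : θ * μ (ball v r) < μ (ball v r)) :
    ∃ δ : ℝ, 0 < δ ∧ δ < r / 2 ∧ θ * μ (ball v r) < μ (ball v (r - 2 * δ)) := by
  have hmono : Monotone (fun k : ℕ => ball v (r - r / (k + 2))) := by
    intro i j hij
    apply ball_subset_ball
    apply sub_le_sub_left
    apply div_le_div_of_nonneg_left hr.le (by positivity)
    exact_mod_cast by omega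
  have hU : (⋃ k : ℕ, ball v (r - r / (k + 2))) = ball v r := by
    ext x
    simp only [Set.mem_iUnion, mem_ball]
    constructor
    · rintro ⟨k, hk⟩
      have : r - r / (k + 2) ≤ r := by
        have : (0:ℝ) < r / (k + 2) := by positivity
        linarith
      linarith
    · intro hx
      have hε : 0 < r - dist x v := by linarith
      obtain ⟨k, hk⟩ := exists_nat_gt (r / (r - dist x v))
      refine ⟨k, ?_⟩
      have h2 : (0:ℝ) < (k:ℝ) + 2 := by positivity
      have : r / ((k:ℝ) + 2) < r - dist x v := by
        rw [div_lt_iff₀ h2]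
        rw [div_lt_iff₀ hε] at hk
        nlinarith
      linarith
  have hμ : μ (ball v r) = ⨆ k : ℕ, μ (ball v (r - r / (k + 2))) := by
    rw [← hU]
    exact (hmono.directed_le).measure_iUnion
  rw [hμ] at h
  obtain ⟨k, hk⟩ := lt_iSup_iff.mp h
  refine ⟨r / (2 * (k + 2)), by positivity, ?_, ?_⟩
  · have h2 : (2:ℝ) ≤ 2 * ((k:ℝ) + 2) := by nlinarith [Nat.cast_nonneg (α := ℝ) k]
    calc r / (2 * ((k:ℝ) + 2)) ≤ r / 4 := by
          apply div_le_div_of_nonneg_left hr.le (by norm_num) (by nlinarith [Nat.cast_nonneg (α := ℝ) k])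
      _ < r / 2 := by linarith
  · have : r - 2 * (r / (2 * ((k:ℝ) + 2))) = r - r / ((k:ℝ) + 2) := by
      field_simp
    rw [this, hμ]
    exact hk

theorem stmt8 {X : Type*} [MetricSpace X] [TopologicalSpace.SeparableSpace X]
    [MeasurableSpace X] [BorelSpace X] (μ : Measure X) [IsProbabilityMeasure μ]
    (u : X) :
    (∀ r : ℕ → ℝ, (∀ n, 0 < r n) → Tendsto r atTop (𝓝 0) →
        ∀ v : X, v ≠ u →
          1 ≤ Filter.liminf
            (fun n => mRatio (μ (ball u (r n))) (μ (ball v (r n)))) atTop)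
    ↔ ∀ v : X, v ≠ u →
        ∃ us vs : ℕ → X, Tendsto us atTop (𝓝 u) ∧ Tendsto vs atTop (𝓝 v) ∧
          ∀ r : ℕ → ℝ, (∀ n, 0 < r n) → Tendsto r atTop (𝓝 0) →
            1 ≤ Filter.liminf
              (fun n => mRatio (μ (ball (us n) (r n))) (μ (ball (vs n) (r n)))) atTop := by
  constructor
  · intro H v hv
    exact ⟨fun _ => u, fun _ => v, tendsto_const_nhds, tendsto_const_nhds,
      fun r hr hr0 => H r hr hr0 v hv⟩
  · intro H r hrpos hr0 v hv
    obtain ⟨us, vs, hus, hvs, Hmain⟩ := H v hv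
    by_contra hlt
    push_neg at hlt
    -- pick constants c < θ strictly between liminf and 1
    obtain ⟨c, hLc, hc1⟩ := exists_between hlt
    obtain ⟨θ, hcθ, hθ1⟩ := exists_between hc1
    have hc0 : (0:ENNReal) < c := lt_of_le_of_lt zero_le hLc
    have hθ0 : (0:ENNReal) < θ := hc0.trans hcθ
    have hθtop : θ ≠ ⊤ := (hθ1.trans ENNReal.one_lt_top).ne
    -- frequently, the ratio is < c
    have hfreq : ∃ᶠ n in atTop,
        mRatio (μ (ball u (r n))) (μ (ball v (r n))) < c :=
      frequently_lt_of_liminf_lt (by isBoundedDefault) hLc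
    obtain ⟨φ, hφ, hφP⟩ := extraction_of_frequently_atTop hfreq
    -- at each φ k, the denominator is nonzero and numerator < c * denominator
    have key : ∀ k, μ (ball v (r (φ k))) ≠ 0 ∧
        μ (ball u (r (φ k))) < c * μ (ball v (r (φ k))) := by
      intro k
      have hk := hφP k
      set a := μ (ball u (r (φ k)))
      set b := μ (ball v (r (φ k)))
      have hb : b ≠ 0 := by
        intro hb0
        rw [mRatio, if_pos hb0] at hk
        split_ifs at hk with ha
        · exact absurd (hk.trans hc1) (lt_irrefl _)
        · exact absurd (hk.trans hc1) (by simp)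
      refine ⟨hb, ?_⟩
      rw [mRatio, if_neg hb] at hk
      have hbtop : b ≠ ⊤ := measure_ne_top μ _
      rwa [ENNReal.div_lt_iff (Or.inl hb) (Or.inl hbtop)] at hk
    -- choose δ k via left-continuity of the ball measure
    have hδex : ∀ k, ∃ δ : ℝ, 0 < δ ∧ δ < r (φ k) / 2 ∧
        θ * μ (ball v (r (φ k))) < μ (ball v (r (φ k) - 2 * δ)) := by
      intro k
      apply ball_sup_aux μ v _ (hrpos _)
      have hb := (key k).1
      have hbtop : μ (ball v (r (φ k))) ≠ ⊤ := measure_ne_top μ _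
      calc θ * μ (ball v (r (φ k))) < 1 * μ (ball v (r (φ k))) := by
            rw [mul_comm θ, mul_comm 1]; exact ENNReal.mul_lt_mul_right hb hbtop hθ1
        _ = μ (ball v (r (φ k))) := one_mul _
    choose δ hδ0 hδhalf hδmeas using hδex
    -- choose extraction ψ with us/vs close to u/v
    have hQ : ∀ k, ∀ᶠ m in atTop, dist (us m) u < δ k ∧ dist (vs m) v < δ k := by
      intro k
      exact ((hus.eventually (Metric.ball_mem_nhds u (hδ0 k))).and
        (hvs.eventually (Metric.ball_mem_nhds v (hδ0 k))))
    obtain ⟨ψ, hψ, hψP⟩ := extraction_forall_of_eventually hQ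
    -- define the radius sequence
    set ρ : ℕ → ℝ := Function.extend ψ (fun k => r (φ k) - δ k) (fun m => 1 / (m + 1)) with hρ
    have hρψ : ∀ k, ρ (ψ k) = r (φ k) - δ k := fun k => hψ.injective.extend_apply _ _ _
    have hρpos : ∀ m, 0 < ρ m := by
      intro m
      by_cases h : ∃ k, ψ k = m
      · obtain ⟨k, hk⟩ := h
        rw [← hk, hρψ k]
        have := hδhalf k
        have := hrpos (φ k)
        linarith
      · rw [hρ, Function.extend_apply' _ _ _ h]
        positivity
    -- ρ tends to 0
    have hρ0 : Tendsto ρ atTop (𝓝 0) := by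
      have hsub : Tendsto (fun k => r (φ k)) atTop (𝓝 0) :=
        hr0.comp hφ.tendsto_atTop
      rw [Metric.tendsto_atTop]
      intro ε hε
      rw [Metric.tendsto_atTop] at hsub
      obtain ⟨K, hK⟩ := hsub ε hε
      obtain ⟨M, hM⟩ := exists_nat_gt (1 / ε)
      refine ⟨max (ψ K) M, fun m hm => ?_⟩
      have hmb : ρ m > 0 := hρpos m
      rw [Real.dist_eq, sub_zero, abs_of_pos hmb]
      by_cases h : ∃ k, ψ k = m
      · obtain ⟨k, hk⟩ := h
        have hkK : K ≤ k := hψ.le_iff_le.mp (hk ▸ le_trans (le_max_left _ _) hm)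
        rw [← hk, hρψ k]
        have := hK k hkK
        rw [Real.dist_eq, sub_zero, abs_of_pos (hrpos (φ k))] at this
        have := hδ0 k
        linarith
      · rw [hρ, Function.extend_apply' _ _ _ h]
        have hmM : (M:ℝ) ≤ m := by exact_mod_cast le_trans (le_max_right _ _) hm
        rw [div_lt_iff₀ hε] at hM
        rw [div_lt_iff₀ (by positivity : (0:ℝ) < (m:ℝ) + 1)]
        nlinarith

    -- apply the main hypothesis
    have hlim := Hmain ρ hρpos hρ0
    -- the ratio along ψ is ≤ c / θ
    have hbound : ∀ k, mRatio (μ (ball (us (ψ k)) (ρ (ψ k)))) (μ (ball (vs (ψ k)) (ρ (ψ k))))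
        ≤ c / θ := by
      intro k
      obtain ⟨hdu, hdv⟩ := hψP k
      set n := φ k
      have hρk := hρψ k
      have hAsub : ball (us (ψ k)) (ρ (ψ k)) ⊆ ball u (r n) := by
        rw [hρk]
        apply ball_subset_ball'
        linarith
      have hBsub : ball v (r n - 2 * δ k) ⊆ ball (vs (ψ k)) (ρ (ψ k)) := by
        rw [hρk]
        apply ball_subset_ball'
        rw [dist_comm]
        linarith
      set b := μ (ball v (r n))
      have hbne : b ≠ 0 := (key k).1
      have hbtop : b ≠ ⊤ := measure_ne_top μ _
      have hA : μ (ball (us (ψ k)) (ρ (ψ k))) ≤ c * b :=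
        le_trans (measure_mono hAsub) (key k).2.le
      have hB : θ * b ≤ μ (ball (vs (ψ k)) (ρ (ψ k))) :=
        le_trans (hδmeas k).le (measure_mono hBsub)
      have hBne : μ (ball (vs (ψ k)) (ρ (ψ k))) ≠ 0 := by
        intro h0
        rw [h0, le_zero_iff] at hB
        rcases mul_eq_zero.mp hB with h | h
        · exact hθ0.ne' h
        · exact hbne h
      rw [mRatio, if_neg hBne]
      calc μ (ball (us (ψ k)) (ρ (ψ k))) / μ (ball (vs (ψ k)) (ρ (ψ k)))
          ≤ (c * b) / (θ * b) := ENNReal.div_le_div hA hB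
        _ = c / θ := ENNReal.mul_div_mul_right _ _ hbne hbtop
    -- conclude: liminf ≤ c/θ < 1, contradiction
    have hfr : ∃ᶠ m in atTop,
        mRatio (μ (ball (us m) (ρ m))) (μ (ball (vs m) (ρ m))) ≤ c / θ :=
      hψ.tendsto_atTop.frequently (Frequently.of_forall hbound)
    have hliminf_le := liminf_le_of_frequently_le hfr
    have hcθ1 : c / θ < 1 := by
      rw [ENNReal.div_lt_iff (Or.inl hθ0.ne') (Or.inl hθtop), one_mul]
      exact hcθ
    exact absurd (hlim.trans hliminf_le) (not_le.mpr hcθ1)
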